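/- arXiv:1207.0988 — 11 statements merged into one kernel-verified Lean document; each statement's English description precedes it below -/
import Mathlib

section
/- A finite conjunction of xor-constraints over GF(2) is unsatisfiable if and only if some subset of the constraints sums (over GF(2)) to the contradictory constraint 0 ≡ 1 (i.e., zero coefficient vector and parity 1). -/
/-- A finite conjunction of xor-constraints over GF(2) is unsatisfiable iff some
subset of the constraints sums to the contradictory constraint `0 ≡ 1`. -/
theorem xor_unsat_iff_subset_sum {V ι : Type*} [Fintype V] [Fintype ι]
    (C : ι → (V → ZMod 2) × ZMod 2) :
    (¬ ∃ x : V → ZMod 2, ∀ i, ∑ v, (C i).1 v * x v = (C i).2) ↔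
      ∃ S : Finset ι, (∀ v, ∑ i ∈ S, (C i).1 v = 0) ∧ (∑ i ∈ S, (C i).2 = 1) := by
  classical
  constructor
  · intro hunsat
    -- the linear map x ↦ (i ↦ ∑ v, A i v * x v)
    set M : Matrix ι V (ZMod 2) := fun i v => (C i).1 v with hM
    set b : ι → ZMod 2 := fun i => (C i).2 with hb
    have hnmem : b ∉ LinearMap.range M.mulVecLin := by
      rintro ⟨x, hx⟩
      exact hunsat ⟨x, fun i => by
        have := congrFun hx i
        change (M.mulVec x) i = b i at this
        simpa [Matrix.mulVecLin_apply, Matrix.mulVec, dotProduct, M, b] using this⟩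
    obtain ⟨f, hfb, hfmap⟩ := Submodule.exists_dual_map_eq_bot_of_notMem hnmem inferInstance
    set c : ι → ZMod 2 := fun i => f (Pi.single i 1) with hc
    have hf_eq : ∀ y : ι → ZMod 2, f y = ∑ i, y i * c i := by
      intro y
      have hy : y = ∑ i, y i • Pi.single i (1 : ZMod 2) := by
        ext j; simp [Pi.single_apply]
      calc f y = f (∑ i, y i • Pi.single i (1 : ZMod 2)) := by rw [← hy]
        _ = ∑ i, y i * c i := by
            rw [map_sum]; simp [c, smul_eq_mul]
    have hrange0 : ∀ x : V → ZMod 2, f (M.mulVec x) = 0 := by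
      intro x
      have hmem : f (M.mulVec x) ∈ Submodule.map f (LinearMap.range M.mulVecLin) :=
        Submodule.mem_map_of_mem ⟨x, rfl⟩
      rw [hfmap] at hmem
      exact (Submodule.mem_bot (ZMod 2)).mp hmem
    have hfilter : ∀ g : ι → ZMod 2,
        ∑ i ∈ Finset.univ.filter (fun i => c i = 1), g i = ∑ i, g i * c i := by
      intro g
      rw [Finset.sum_filter]
      apply Finset.sum_congr rfl
      intro i _
      have hci : c i = 0 ∨ c i = 1 := by
        have : ∀ a : ZMod 2, a = 0 ∨ a = 1 := by decide
        exact this (c i)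
      rcases hci with hci | hci <;> simp [hci]
    refine ⟨Finset.univ.filter (fun i => c i = 1), ?_, ?_⟩
    · intro v
      have h := hrange0 (Pi.single v 1)
      rw [hf_eq] at h
      have hsum : ∑ i, (M.mulVec (Pi.single v 1)) i * c i = ∑ i, M i v * c i := by
        apply Finset.sum_congr rfl
        intro i _
        congr 1
        simp [Matrix.mulVec, dotProduct, Pi.single_apply, mul_comm]
      rw [hsum] at h
      rw [hfilter]
      exact h
    · have hfb1 : f b = 1 := by
        have : ∀ a : ZMod 2, a ≠ 0 → a = 1 := by decide
        exact this _ hfb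
      rw [hf_eq] at hfb1
      rw [hfilter]
      exact hfb1
  · rintro ⟨S, hS0, hS1⟩ ⟨x, hx⟩
    have h1 : ∑ i ∈ S, ∑ v, (C i).1 v * x v = ∑ i ∈ S, (C i).2 :=
      Finset.sum_congr rfl fun i _ => hx i
    rw [Finset.sum_comm] at h1
    have h2 : ∀ v, ∑ i ∈ S, (C i).1 v * x v = 0 := by
      intro v
      rw [← Finset.sum_mul, hS0 v, zero_mul]
    rw [Finset.sum_congr rfl (fun v _ => h2 v)] at h1
    simp [hS1] at h1
end

section
/- Let ⟨E, τ⟩ be a propagation-saturated assigned tableau for a conjunction φ of xor-constraints. Then the formula φ together with the partial assignment τ (viewed as unit constraints x ≡ τ(x)) is satisfiable if and only if ⟨E, τ⟩ is consistent, i.e., no fully-assigned equation of E is violated by τ. -/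
/-- For a propagation-saturated assigned tableau `⟨E,τ⟩` for `φ`, the formula
`φ ∧ τ` is satisfiable iff `⟨E,τ⟩` is consistent (no fully-assigned equation
is violated by `τ`). -/
theorem assigned_tableau_sat_iff_consistent {V ι : Type*} [Fintype V]
    (C : ι → (V → ZMod 2) × ZMod 2)
    (B : Finset V) (r : V → V → ZMod 2) (p : V → ZMod 2)
    (τ : V → Option (ZMod 2))
    (hnb : ∀ b ∈ B, ∀ b' ∈ B, r b b' = 0)
    (hequiv : ∀ x : V → ZMod 2,
      (∀ i, ∑ v, (C i).1 v * x v = (C i).2) ↔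
        ∀ b ∈ B, x b = (∑ v, r b v * x v) + p b)
    (hsatur : ∀ b ∈ B, ((τ b).isSome ↔ ∀ v, r b v ≠ 0 → (τ v).isSome)) :
    (∃ x : V → ZMod 2, (∀ v c, τ v = some c → x v = c) ∧
        (∀ i, ∑ v, (C i).1 v * x v = (C i).2)) ↔
      (∀ b ∈ B, ((τ b).isSome ∧ ∀ v, r b v ≠ 0 → (τ v).isSome) →
        (τ b).getD 0 = (∑ v, r b v * (τ v).getD 0) + p b) := by
  classical
  constructor
  · rintro ⟨x, hx, hsat⟩ b hb ⟨hbt, hall⟩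
    have heq := (hequiv x).mp hsat b hb
    have hs : ∑ v, r b v * x v = ∑ v, r b v * (τ v).getD 0 := by
      apply Finset.sum_congr rfl
      intro v _
      by_cases h : r b v = 0
      · simp [h]
      · obtain ⟨c, hc⟩ := Option.isSome_iff_exists.mp (hall v h)
        rw [hx v c hc, hc]; rfl
    obtain ⟨c, hc⟩ := Option.isSome_iff_exists.mp hbt
    rw [hc]
    have hxb := hx b c hc
    simp only [Option.getD_some]
    rw [← hxb, ← hs]; exact heq
  · intro hcons
    set y : V → ZMod 2 := fun v => (τ v).getD 0 with hy
    refine ⟨fun v => if v ∈ B then (∑ w, r v w * y w) + p v else y v, ?_, ?_⟩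
    · intro v c hc
      by_cases hv : v ∈ B
      · simp only [if_pos hv]
        have hsome : (τ v).isSome := by simp [hc]
        have hall := (hsatur v hv).mp hsome
        have hc' := hcons v hv ⟨hsome, hall⟩
        rw [hc] at hc'
        simpa [hy] using hc'.symm
      · simp [if_neg hv, hy, hc]
    · apply (hequiv _).mpr
      intro b hb
      simp only [if_pos hb]
      congr 1
      apply Finset.sum_congr rfl
      intro w _
      by_cases hw : w ∈ B
      · simp [hnb b hb w hw]
      · simp [if_neg hw]
end

section
/- Let ⟨E, τ⟩ be a consistent, propagation-saturated assigned tableau for a conjunction φ of xor-constraints. Then for any variable y and value v ∈ GF(2), φ together with τ (as unit constraints) logically implies y ≡ v if and only if τ(y) is defined and equals v. -/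
/-- For a consistent, propagation-saturated assigned tableau `⟨E,τ⟩` for `φ`:
`φ ∧ τ ⊨ (y ≡ v)` iff `τ(y)` is defined and equals `v`. -/
theorem assigned_tableau_implied_literal {V ι : Type*} [Fintype V]
    (C : ι → (V → ZMod 2) × ZMod 2)
    (B : Finset V) (r : V → V → ZMod 2) (p : V → ZMod 2)
    (τ : V → Option (ZMod 2))
    (hnb : ∀ b ∈ B, ∀ b' ∈ B, r b b' = 0)
    (hequiv : ∀ x : V → ZMod 2,
      (∀ i, ∑ v, (C i).1 v * x v = (C i).2) ↔
        ∀ b ∈ B, x b = (∑ v, r b v * x v) + p b)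
    (hsatur : ∀ b ∈ B, ((τ b).isSome ↔ ∀ v, r b v ≠ 0 → (τ v).isSome))
    (hcons : ∀ b ∈ B, ((τ b).isSome ∧ ∀ v, r b v ≠ 0 → (τ v).isSome) →
      (τ b).getD 0 = (∑ v, r b v * (τ v).getD 0) + p b)
    (y : V) (v : ZMod 2) :
    (∀ x : V → ZMod 2, (∀ w c, τ w = some c → x w = c) →
        (∀ i, ∑ w, (C i).1 w * x w = (C i).2) → x y = v) ↔
      τ y = some v := by
  classical
  -- the canonical extension of τ with defaults f on unassigned variables
  set X : (V → ZMod 2) → V → ZMod 2 :=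
    fun f w => if w ∈ B then (∑ u, r w u * (τ u).getD (f u)) + p w
               else (τ w).getD (f w) with hX
  have hXB : ∀ f w, w ∈ B → X f w = (∑ u, r w u * (τ u).getD (f u)) + p w := by
    intro f w hw; simp [hX, hw]
  have hXnB : ∀ f w, w ∉ B → X f w = (τ w).getD (f w) := by
    intro f w hw; simp [hX, hw]
  have hext : ∀ f w c, τ w = some c → X f w = c := by
    intro f w c hwc
    by_cases hw : w ∈ B
    · have hsome : (τ w).isSome := by simp [hwc]
      have hall := (hsatur w hw).mp hsome
      have hc := hcons w hw ⟨hsome, hall⟩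
      have hsum : (∑ u, r w u * (τ u).getD (f u)) = ∑ u, r w u * (τ u).getD 0 := by
        refine Finset.sum_congr rfl fun u _ => ?_
        by_cases hu : r w u = 0
        · simp [hu]
        · obtain ⟨a, ha⟩ := Option.isSome_iff_exists.mp (hall u hu)
          simp [ha]
      rw [hXB f w hw, hsum, ← hc, hwc]; rfl
    · rw [hXnB f w hw, hwc]; rfl
  have hsat : ∀ f i, ∑ w, (C i).1 w * X f w = (C i).2 := by
    intro f
    refine (hequiv (X f)).mpr fun b hb => ?_
    have hs : (∑ u, r b u * X f u) = ∑ u, r b u * (τ u).getD (f u) := by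
      refine Finset.sum_congr rfl fun u _ => ?_
      by_cases hu : u ∈ B
      · simp [hnb b hb u hu]
      · rw [hXnB f u hu]
    rw [hXB f b hb, hs]
  constructor
  · intro h
    by_cases hy : (τ y).isSome
    · obtain ⟨c, hc⟩ := Option.isSome_iff_exists.mp hy
      have hv := h (X (fun _ => 0)) (hext _) (hsat _)
      rw [hext (fun _ => 0) y c hc] at hv
      rw [hc, hv]
    · exfalso
      have hyn : τ y = none := Option.not_isSome_iff_eq_none.mp hy
      by_cases hyB : y ∈ B
      · have hnotall : ¬ ∀ u, r y u ≠ 0 → (τ u).isSome :=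
          fun hh => hy ((hsatur y hyB).mpr hh)
        push_neg at hnotall
        obtain ⟨u, hu, hus⟩ := hnotall
        have hune : τ u = none := Option.not_isSome_iff_eq_none.mp (by simpa using hus)
        have hru : r y u = 1 := by
          have h2 : ∀ a : ZMod 2, a ≠ 0 → a = 1 := by decide
          exact h2 _ hu
        set f0 : V → ZMod 2 := fun _ => 0 with hf0
        set f1 : V → ZMod 2 := fun w => if w = u then 1 else 0 with hf1
        have h0 := h (X f0) (hext _) (hsat _)
        have h1 := h (X f1) (hext _) (hsat _)
        have hsum1 : (∑ w, r y w * (τ w).getD (f1 w))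
            = (∑ w, r y w * (τ w).getD (f0 w)) + 1 := by
          rw [← Finset.add_sum_erase Finset.univ _ (Finset.mem_univ u),
              ← Finset.add_sum_erase Finset.univ
                (fun w => r y w * (τ w).getD (f0 w)) (Finset.mem_univ u)]
          have he : ∑ w ∈ Finset.univ.erase u, r y w * (τ w).getD (f1 w)
              = ∑ w ∈ Finset.univ.erase u, r y w * (τ w).getD (f0 w) := by
            refine Finset.sum_congr rfl fun w hw => ?_
            have : w ≠ u := Finset.ne_of_mem_erase hw
            simp [hf0, hf1, this]
          rw [he, hune, hf0, hf1]
          simp [hru]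
          ring
        rw [hXB f0 y hyB] at h0
        rw [hXB f1 y hyB, hsum1] at h1
        rw [add_right_comm, h0] at h1
        exact one_ne_zero (add_left_cancel (h1.trans (add_zero v).symm))
      · have h0 := h (X (fun _ => 0)) (hext _) (hsat _)
        have h1 := h (X (fun w => if w = y then 1 else 0)) (hext _) (hsat _)
        rw [hXnB _ y hyB, hyn] at h0 h1
        simp at h0 h1
        rw [← h0] at h1
        exact one_ne_zero h1
  · intro hyv x hx _
    exact hx y v hyv
end

section
/- Let ⟨E, τ⟩ be a consistent, propagation-saturated assigned tableau for φ. If y and z are distinct τ-unassigned variables that are both non-basic in E, then φ ∧ τ does not logically imply y ⊕ z ≡ p for either parity p ∈ GF(2). -/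
/-- For a consistent, propagation-saturated assigned tableau `⟨E,τ⟩` for `φ`,
if `y` and `z` are distinct `τ`-unassigned non-basic variables, then
`φ ∧ τ` does not imply `y ⊕ z ≡ p` for any parity `p`. -/
theorem assigned_tableau_no_binary_nonbasic {V ι : Type*} [Fintype V]
    (C : ι → (V → ZMod 2) × ZMod 2)
    (B : Finset V) (r : V → V → ZMod 2) (p : V → ZMod 2)
    (τ : V → Option (ZMod 2))
    (hnb : ∀ b ∈ B, ∀ b' ∈ B, r b b' = 0)
    (hequiv : ∀ x : V → ZMod 2,
      (∀ i, ∑ v, (C i).1 v * x v = (C i).2) ↔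
        ∀ b ∈ B, x b = (∑ v, r b v * x v) + p b)
    (hsatur : ∀ b ∈ B, ((τ b).isSome ↔ ∀ v, r b v ≠ 0 → (τ v).isSome))
    (hcons : ∀ b ∈ B, ((τ b).isSome ∧ ∀ v, r b v ≠ 0 → (τ v).isSome) →
      (τ b).getD 0 = (∑ v, r b v * (τ v).getD 0) + p b)
    (y z : V) (hyz : y ≠ z) (hy : τ y = none) (hz : τ z = none)
    (hyB : y ∉ B) (hzB : z ∉ B) (q : ZMod 2) :
    ¬ (∀ x : V → ZMod 2, (∀ w c, τ w = some c → x w = c) →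
        (∀ i, ∑ w, (C i).1 w * x w = (C i).2) → x y + x z = q) := by
  classical
  intro h
  set g : V → ZMod 2 := fun v => if v = y then q + 1 else (τ v).getD 0 with hg
  set x : V → ZMod 2 := fun v => if v ∈ B then (∑ w, r v w * g w) + p v else g v with hx
  have hsum : ∀ b ∈ B, (∑ v, r b v * x v) = ∑ v, r b v * g v := by
    intro b hb
    apply Finset.sum_congr rfl
    intro v _
    by_cases hvB : v ∈ B
    · rw [hnb b hb v hvB]; ring
    · simp [hx, hvB]
  have hext : ∀ w c, τ w = some c → x w = c := by
    intro w c hwc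
    have hwS : (τ w).isSome := by simp [hwc]
    by_cases hwB : w ∈ B
    · have hall : ∀ v, r w v ≠ 0 → (τ v).isSome := (hsatur w hwB).mp hwS
      have hc := hcons w hwB ⟨hwS, hall⟩
      have : (∑ v, r w v * g v) = ∑ v, r w v * (τ v).getD 0 := by
        apply Finset.sum_congr rfl
        intro v _
        by_cases hrv : r w v = 0
        · rw [hrv]; ring
        · have hvS := hall v hrv
          have hvy : v ≠ y := by rintro rfl; simp [hy] at hvS
          simp [hg, hvy]
      simp only [hx, if_pos hwB, this]
      rw [← hc, hwc]; rfl
    · have hwy : w ≠ y := by rintro rfl; simp [hy] at hwc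
      simp [hx, hwB, hg, hwy, hwc]
  have hsat : ∀ i, ∑ w, (C i).1 w * x w = (C i).2 := by
    rw [hequiv]
    intro b hb
    rw [hsum b hb]
    simp [hx, hb]
  have := h x hext hsat
  have hxy : x y = q + 1 := by simp [hx, hyB, hg]
  have hxz : x z = 0 := by simp [hx, hzB, hg, hyz.symm, hz]
  rw [hxy, hxz] at this
  simp at this
end

section
/- Let ⟨E, τ⟩ be a consistent, propagation-saturated assigned tableau for φ, and let y be a τ-unassigned basic variable with equation e of the form y := ... and z a τ-unassigned non-basic variable. Then φ ∧ τ logically implies y ⊕ z ≡ p if and only if substituting the τ-assigned variables in e by their values yields exactly the equation y := z ⊕ p. -/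
private lemma zmod2_aux (a : ZMod 2) (h : a + 1 = 0) : a = 1 := by
  revert h; generalize a = b; revert b; decide

private lemma zmod2_self (a : ZMod 2) : a + a = 0 := by
  revert a; decide

/-- For a consistent, propagation-saturated assigned tableau `⟨E,τ⟩` for `φ`,
with `y` an unassigned basic variable (equation `e : y := ...`) and `z` an
unassigned non-basic variable: `φ ∧ τ ⊨ (y ⊕ z ≡ q)` iff `e|τ` is exactly
`y := z ⊕ q`. -/
theorem assigned_tableau_binary_basic_nonbasic {V ι : Type*} [Fintype V]
    (C : ι → (V → ZMod 2) × ZMod 2)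
    (B : Finset V) (r : V → V → ZMod 2) (p : V → ZMod 2)
    (τ : V → Option (ZMod 2))
    (hnb : ∀ b ∈ B, ∀ b' ∈ B, r b b' = 0)
    (hequiv : ∀ x : V → ZMod 2,
      (∀ i, ∑ v, (C i).1 v * x v = (C i).2) ↔
        ∀ b ∈ B, x b = (∑ v, r b v * x v) + p b)
    (hsatur : ∀ b ∈ B, ((τ b).isSome ↔ ∀ v, r b v ≠ 0 → (τ v).isSome))
    (hcons : ∀ b ∈ B, ((τ b).isSome ∧ ∀ v, r b v ≠ 0 → (τ v).isSome) →
      (τ b).getD 0 = (∑ v, r b v * (τ v).getD 0) + p b)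
    (y z : V) (hyB : y ∈ B) (hzB : z ∉ B)
    (hy : τ y = none) (hz : τ z = none) (q : ZMod 2) :
    (∀ x : V → ZMod 2, (∀ w c, τ w = some c → x w = c) →
        (∀ i, ∑ w, (C i).1 w * x w = (C i).2) → x y + x z = q) ↔
      (r y z = 1 ∧ (∀ v, τ v = none → v ≠ z → r y v = 0) ∧
        (∑ v, r y v * (τ v).getD 0) + p y = q) := by
  classical
  set S := ∑ v, r y v * (τ v).getD 0 with hS
  constructor
  · intro h
    -- key: for any choice f of values for unassigned variables, the constructed
    -- solution is admissible
    have key : ∀ f : V → ZMod 2,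
        (∑ w, r y w * (if (τ w).isSome then (τ w).getD 0 else f w)) + p y + f z = q := by
      intro f
      set base : V → ZMod 2 := fun v => if (τ v).isSome then (τ v).getD 0 else f v with hbase
      set x : V → ZMod 2 :=
        fun v => if v ∈ B then (∑ w, r v w * base w) + p v else base v with hxdef
      have hxnb : ∀ v, v ∉ B → x v = base v := by
        intro v hv; simp [hxdef, hv]
      have hsum : ∀ b ∈ B, ∑ w, r b w * x w = ∑ w, r b w * base w := by
        intro b hb
        refine Finset.sum_congr rfl fun w _ => ?_
        by_cases hw : w ∈ B
        · simp [hnb b hb w hw]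
        · rw [hxnb w hw]
      have hxeq : ∀ i, ∑ w, (C i).1 w * x w = (C i).2 := by
        rw [hequiv]
        intro b hb
        rw [hsum b hb]
        simp [hxdef, hb]
      have hxt : ∀ w c, τ w = some c → x w = c := by
        intro w c hwc
        have hsw : (τ w).isSome := by simp [hwc]
        by_cases hw : w ∈ B
        · have h2 := (hsatur w hw).mp hsw
          have hc := hcons w hw ⟨hsw, h2⟩
          have hsb : ∑ v, r w v * base v = ∑ v, r w v * (τ v).getD 0 := by
            refine Finset.sum_congr rfl fun v _ => ?_
            by_cases hrv : r w v = 0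
            · simp [hrv]
            · have hvS := h2 v hrv
              simp [hbase, hvS]
          have : x w = (∑ v, r w v * (τ v).getD 0) + p w := by
            simp only [hxdef, hw, if_pos, hsb]
          rw [this, ← hc, hwc]
          rfl
        · rw [hxnb w hw]
          simp [hbase, hwc]
      have := h x hxt hxeq
      have hxy : x y = (∑ w, r y w * base w) + p y := by simp [hxdef, hyB]
      have hxz : x z = f z := by
        rw [hxnb z hzB]; simp [hbase, hz]
      rw [hxy, hxz] at this
      simpa [hbase] using this
    -- a helper to evaluate the sum for indicator functions
    have hbase0 : ∀ w : V, (if (τ w).isSome then (τ w).getD 0 else (0 : ZMod 2))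
        = (τ w).getD 0 := by
      intro w; cases τ w <;> simp
    have key0 : S + p y + 0 = q := by
      have := key (fun _ => 0)
      simpa [hbase0] using this
    have keyv : ∀ v, τ v = none →
        S + r y v + p y + (if z = v then (1:ZMod 2) else 0) = q := by
      intro v hv
      have := key (fun w => if w = v then 1 else 0)
      have hb : ∀ w : V, (if (τ w).isSome then (τ w).getD 0
          else (if w = v then (1:ZMod 2) else 0))
          = (τ w).getD 0 + (if w = v then 1 else 0) := by
        intro w
        by_cases hwv : w = v
        · subst hwv; simp [hv]
        · simp only [hwv, if_neg, if_false]
          cases τ w <;> simp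
      rw [Finset.sum_congr rfl (fun w _ => by rw [hb w])] at this
      simp only [mul_add, Finset.sum_add_distrib, mul_ite, mul_one, mul_zero,
        Finset.sum_ite_eq', Finset.mem_univ, if_true] at this
      rw [hS]
      by_cases hzv' : z = v
      · simp only [if_pos hzv'] at this ⊢
        linear_combination this
      · simp only [if_neg hzv'] at this ⊢
        linear_combination this
    have hkz := keyv z hz
    rw [if_pos rfl] at hkz
    refine ⟨?_, ?_, ?_⟩
    · apply zmod2_aux
      linear_combination hkz - key0
    · intro v hv hvz
      have hkv := keyv v hv
      rw [if_neg (fun h' => hvz h'.symm)] at hkv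
      linear_combination hkv - key0
    · linear_combination key0
  · rintro ⟨h1, h2, h3⟩ x hxt hxE
    have hxy : x y = (∑ v, r y v * x v) + p y := (hequiv x).mp hxE y hyB
    have hsum : ∑ v, r y v * x v = S + x z := by
      have hterm : ∀ v, r y v * x v
          = r y v * (τ v).getD 0 + (if v = z then x z else 0) := by
        intro v
        rcases hv : τ v with _ | c
        · by_cases hvz : v = z
          · subst hvz; simp [hz, h1]
          · simp [h2 v hv hvz, hvz]
        · have hxv : x v = c := hxt v c hv
          have hvz : v ≠ z := by rintro rfl; rw [hz] at hv; exact nomatch hv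
          simp [hxv, hv, hvz]
      rw [Finset.sum_congr rfl (fun v _ => hterm v), Finset.sum_add_distrib,
        Finset.sum_ite_eq' Finset.univ z (fun _ => x z)]
      simp [hS]
    rw [hxy, hsum]
    linear_combination h3 + zmod2_self (x z)
end

section
/- Let ⟨E, τ⟩ be a consistent, propagation-saturated assigned tableau for φ, and let y and z be distinct τ-unassigned basic variables with equations e_y : y := ... and e_z : z := ... in E. Then φ ∧ τ logically implies y ⊕ z ≡ p if and only if, after substituting the τ-assigned variables by their values, the right-hand sides f of e_y and g of e_z satisfy f ⊕ g = p (i.e., they contain the same unassigned variables and their constants differ by p). -/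
/-- For a consistent, propagation-saturated assigned tableau `⟨E,τ⟩` for `φ`,
with `y` and `z` distinct unassigned basic variables with equations
`e_y : y := ...` and `e_z : z := ...`: `φ ∧ τ ⊨ (y ⊕ z ≡ q)` iff the
`τ`-restricted right-hand sides `f` of `e_y` and `g` of `e_z` satisfy
`f ⊕ g = q` (same unassigned variables, constants differing by `q`). -/
theorem assigned_tableau_binary_basic_basic {V ι : Type*} [Fintype V]
    (C : ι → (V → ZMod 2) × ZMod 2)
    (B : Finset V) (r : V → V → ZMod 2) (p : V → ZMod 2)
    (τ : V → Option (ZMod 2))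
    (hnb : ∀ b ∈ B, ∀ b' ∈ B, r b b' = 0)
    (hequiv : ∀ x : V → ZMod 2,
      (∀ i, ∑ v, (C i).1 v * x v = (C i).2) ↔
        ∀ b ∈ B, x b = (∑ v, r b v * x v) + p b)
    (hsatur : ∀ b ∈ B, ((τ b).isSome ↔ ∀ v, r b v ≠ 0 → (τ v).isSome))
    (hcons : ∀ b ∈ B, ((τ b).isSome ∧ ∀ v, r b v ≠ 0 → (τ v).isSome) →
      (τ b).getD 0 = (∑ v, r b v * (τ v).getD 0) + p b)
    (y z : V) (hyz : y ≠ z) (hyB : y ∈ B) (hzB : z ∈ B)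
    (hy : τ y = none) (hz : τ z = none) (q : ZMod 2) :
    (∀ x : V → ZMod 2, (∀ w c, τ w = some c → x w = c) →
        (∀ i, ∑ w, (C i).1 w * x w = (C i).2) → x y + x z = q) ↔
      ((∀ v, τ v = none → r y v = r z v) ∧
        ((∑ v, r y v * (τ v).getD 0) + p y) +
          ((∑ v, r z v * (τ v).getD 0) + p z) = q) := by
  classical
  constructor
  · intro h
    -- Construct solutions from free choices `s` on unassigned variables.
    set g : (V → ZMod 2) → V → ZMod 2 := fun s w => (τ w).getD (s w) with hgdef
    set X : (V → ZMod 2) → V → ZMod 2 :=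
      fun s v => if τ v = none ∧ v ∈ B then (∑ w, r v w * g s w) + p v else g s v
      with hXdef
    have hext : ∀ s w c, τ w = some c → X s w = c := by
      intro s w c hc
      simp [hXdef, hgdef, hc]
    have hXassigned : ∀ s v, (τ v).isSome → X s v = (τ v).getD 0 := by
      intro s v hv
      obtain ⟨c, hc⟩ := Option.isSome_iff_exists.mp hv
      simp [hXdef, hgdef, hc]
    have hsat : ∀ s, ∀ i, ∑ w, (C i).1 w * X s w = (C i).2 := by
      intro s
      rw [hequiv]
      intro b hb
      by_cases hτb : τ b = none
      · have hXb : X s b = (∑ w, r b w * g s w) + p b := by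
          simp [hXdef, hτb, hb]
        rw [hXb]
        congr 1
        apply Finset.sum_congr rfl
        intro w _
        by_cases hw : r b w = 0
        · simp [hw]
        · have hwB : w ∉ B := fun hwB => hw (hnb b hb w hwB)
          by_cases hτw : τ w = none
          · simp [hXdef, hτw, hwB]
          · obtain ⟨c, hc⟩ := Option.ne_none_iff_exists'.mp hτw
            rw [hext s w c hc]
            simp [hgdef, hc]
      · have hbs : (τ b).isSome := Option.ne_none_iff_isSome.mp hτb
        have hall : ∀ v, r b v ≠ 0 → (τ v).isSome := (hsatur b hb).mp hbs
        have hc := hcons b hb ⟨hbs, hall⟩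
        rw [hXassigned s b hbs, hc]
        congr 1
        apply Finset.sum_congr rfl
        intro w _
        by_cases hw : r b w = 0
        · simp [hw]
        · rw [hXassigned s w (hall w hw)]
    have hkey : ∀ s : V → ZMod 2,
        ((∑ w, r y w * g s w) + p y) + ((∑ w, r z w * g s w) + p z) = q := by
      intro s
      have hXy : X s y = (∑ w, r y w * g s w) + p y := by simp [hXdef, hy, hyB]
      have hXz : X s z = (∑ w, r z w * g s w) + p z := by simp [hXdef, hz, hzB]
      have := h (X s) (hext s) (hsat s)
      rw [hXy, hXz] at this
      exact this
    have hg0 : ∀ w, g (fun _ => 0) w = (τ w).getD 0 := fun w => rfl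
    have hk0 : ((∑ w, r y w * (τ w).getD 0) + p y) +
        ((∑ w, r z w * (τ w).getD 0) + p z) = q := by
      have := hkey (fun _ => 0)
      simpa [hg0] using this
    refine ⟨?_, hk0⟩
    intro v hv
    set s : V → ZMod 2 := fun w => if w = v then 1 else 0 with hsdef
    have hterm : ∀ (a : V), ∀ w : V,
        r a w * g s w = r a w * (τ w).getD 0 + (if w = v then r a w else 0) := by
      intro a w
      by_cases hwv : w = v
      · subst hwv
        simp [hgdef, hsdef, hv]
      · simp [hgdef, hsdef, hwv]
    have esum : ∀ a : V, (∑ w, r a w * g s w) =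
        (∑ w, r a w * (τ w).getD 0) + r a v := by
      intro a
      rw [Finset.sum_congr rfl (fun w _ => hterm a w), Finset.sum_add_distrib,
        Finset.sum_ite_eq' Finset.univ v (fun w => r a w)]
      simp
    have hks := hkey s
    rw [esum y, esum z] at hks
    have h3 : r y v + r z v = 0 := by linear_combination hks - hk0
    revert h3
    generalize r y v = a
    generalize r z v = b
    revert a b
    decide
  · rintro ⟨h1, h2⟩ x hext hx
    have hy' := (hequiv x).mp hx y hyB
    have hz' := (hequiv x).mp hx z hzB
    rw [hy', hz']
    have hs : (∑ w, r y w * x w) + (∑ w, r z w * x w) =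
        (∑ w, r y w * (τ w).getD 0) + (∑ w, r z w * (τ w).getD 0) := by
      rw [← Finset.sum_add_distrib, ← Finset.sum_add_distrib]
      apply Finset.sum_congr rfl
      intro w _
      by_cases hw : τ w = none
      · rw [h1 w hw]
        generalize x w = a
        generalize (τ w).getD 0 = b
        generalize r z w = c
        revert a b c
        decide
      · obtain ⟨c, hc⟩ := Option.ne_none_iff_exists'.mp hw
        rw [hext w c hc]
        simp [hc]
    linear_combination hs + h2
end

section
/- Let (V_a, V_b) be an x-cut partition of a finite conjunction φ of xor-constraints, with φ_a and φ_b the conjunctions of V_a and V_b respectively. If φ together with unit constraints l_1, ..., l_k is unsatisfiable, then either φ_a ∧ l_1 ∧ ... ∧ l_k is unsatisfiable, or φ_b ∧ l_1 ∧ ... ∧ l_k is unsatisfiable, or there is a parity p ∈ GF(2) such that φ_a ∧ l_1 ∧ ... ∧ l_k implies x ≡ p and φ_b ∧ l_1 ∧ ... ∧ l_k implies x ≡ p ⊕ 1. -/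
lemma zmod2_ne_iff {a b : ZMod 2} (h : a ≠ b) : a = b + 1 := by
  revert h; revert a b; decide

/-- Decomposition theorem, unsatisfiable case: for an `x0`-cut partition
`(V_a, V_b)` of `φ`, if `φ ∧ l_1 ∧ ... ∧ l_k` is unsatisfiable then one side is
unsatisfiable with the literals, or the two sides imply opposite values for `x0`. -/
theorem cut_partition_unsat {V ι : Type*} [Fintype V]
    (C : ι → (V → ZMod 2) × ZMod 2) (A : Set ι) (x0 : V)
    (hcut : {v | ∃ i ∈ A, (C i).1 v ≠ 0} ∩ {v | ∃ i ∈ Aᶜ, (C i).1 v ≠ 0} = {x0})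
    (lits : List (V × ZMod 2))
    (hunsat : ¬ ∃ x : V → ZMod 2,
      (∀ i, ∑ v, (C i).1 v * x v = (C i).2) ∧ (∀ l ∈ lits, x l.1 = l.2)) :
    (¬ ∃ x : V → ZMod 2,
        (∀ i ∈ A, ∑ v, (C i).1 v * x v = (C i).2) ∧ (∀ l ∈ lits, x l.1 = l.2)) ∨
    (¬ ∃ x : V → ZMod 2,
        (∀ i ∈ Aᶜ, ∑ v, (C i).1 v * x v = (C i).2) ∧ (∀ l ∈ lits, x l.1 = l.2)) ∨
    (∃ p : ZMod 2,
      (∀ x : V → ZMod 2, (∀ i ∈ A, ∑ v, (C i).1 v * x v = (C i).2) →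
        (∀ l ∈ lits, x l.1 = l.2) → x x0 = p) ∧
      (∀ x : V → ZMod 2, (∀ i ∈ Aᶜ, ∑ v, (C i).1 v * x v = (C i).2) →
        (∀ l ∈ lits, x l.1 = l.2) → x x0 = p + 1)) := by
  classical
  by_cases hA : ∃ x : V → ZMod 2,
      (∀ i ∈ A, ∑ v, (C i).1 v * x v = (C i).2) ∧ (∀ l ∈ lits, x l.1 = l.2)
  · by_cases hB : ∃ x : V → ZMod 2,
        (∀ i ∈ Aᶜ, ∑ v, (C i).1 v * x v = (C i).2) ∧ (∀ l ∈ lits, x l.1 = l.2)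
    · right; right
      obtain ⟨xb0, hb01, hb02⟩ := hB
      obtain ⟨xa0, ha01, ha02⟩ := hA
      have glue : ∀ xa xb : V → ZMod 2,
          (∀ i ∈ A, ∑ v, (C i).1 v * xa v = (C i).2) → (∀ l ∈ lits, xa l.1 = l.2) →
          (∀ i ∈ Aᶜ, ∑ v, (C i).1 v * xb v = (C i).2) → (∀ l ∈ lits, xb l.1 = l.2) →
          xa x0 ≠ xb x0 := by
        intro xa xb ha1 ha2 hb1 hb2 heq
        apply hunsat
        refine ⟨fun v => if v ∈ {v | ∃ i ∈ A, (C i).1 v ≠ 0} then xa v else xb v, ?_, ?_⟩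
        · intro i
          by_cases hiA : i ∈ A
          · rw [← ha1 i hiA]
            apply Finset.sum_congr rfl
            intro v _
            by_cases hc : (C i).1 v = 0
            · simp [hc]
            · have hv : v ∈ {v | ∃ i ∈ A, (C i).1 v ≠ 0} := ⟨i, hiA, hc⟩
              simp [hv]
          · rw [← hb1 i hiA]
            apply Finset.sum_congr rfl
            intro v _
            by_cases hc : (C i).1 v = 0
            · simp [hc]
            · have hvb : v ∈ {v | ∃ i ∈ Aᶜ, (C i).1 v ≠ 0} := ⟨i, hiA, hc⟩
              by_cases hva : v ∈ {v | ∃ i ∈ A, (C i).1 v ≠ 0}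
              · have hvx : v = x0 := by
                  have h2 : v ∈ ({x0} : Set V) := hcut ▸ Set.mem_inter hva hvb
                  exact h2
                simp only [Set.mem_setOf_eq] at hva
                simp only [Set.mem_setOf_eq, if_pos hva, hvx, heq]
                split <;> rfl
              · simp only [Set.mem_setOf_eq] at hva
                simp [hva]
        · intro l hl
          by_cases hva : l.1 ∈ {v | ∃ i ∈ A, (C i).1 v ≠ 0}
          · simp only [Set.mem_setOf_eq] at hva
            simp [hva, ha2 l hl]
          · simp only [Set.mem_setOf_eq] at hva
            simp [hva, hb2 l hl]
      refine ⟨xb0 x0 + 1, ?_, ?_⟩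
      · intro xa ha1 ha2
        exact zmod2_ne_iff (glue xa xb0 ha1 ha2 hb01 hb02)
      · intro xb hb1 hb2
        have h1 : xa0 x0 = xb0 x0 + 1 :=
          zmod2_ne_iff (glue xa0 xb0 ha01 ha02 hb01 hb02)
        have h2 : xa0 x0 ≠ xb x0 := glue xa0 xb ha01 ha02 hb1 hb2
        have h3 : xb x0 = xa0 x0 + 1 := zmod2_ne_iff (Ne.symm h2)
        rw [h3, h1]
    · right; left; exact hB
  · left; exact hA
end

section
/- Let (V_a, V_b) be an x-cut partition of a finite conjunction φ of xor-constraints, with φ_a and φ_b the corresponding conjunctions. If φ ∧ l_1 ∧ ... ∧ l_k is satisfiable and logically implies a literal l̂ (a unit constraint y ≡ v), then one of the following holds: (1) φ_a ∧ l_1 ∧ ... ∧ l_k ⊨ l̂ or φ_b ∧ l_1 ∧ ... ∧ l_k ⊨ l̂; (2) for some parity p, φ_a ∧ l_1 ∧ ... ∧ l_k ⊨ (x ≡ p) and φ_b ∧ l_1 ∧ ... ∧ l_k ∧ (x ≡ p) ⊨ l̂; or (3) for some parity p, φ_b ∧ l_1 ∧ ... ∧ l_k ⊨ (x ≡ p)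 and φ_a ∧ l_1 ∧ ... ∧ l_k ∧ (x ≡ p) ⊨ l̂. -/
private lemma zmod2_ne {a b : ZMod 2} (h : ¬ a = b + 1) : a = b := by
  revert h; revert a b; decide

/-- Decomposition theorem, satisfiable case: for an `x0`-cut partition
`(V_a, V_b)` of `φ`, if `φ ∧ l_1 ∧ ... ∧ l_k` is satisfiable and implies the
literal `y ≡ w`, then the literal is implied by one side alone, or one side
implies a value `p` for `x0` and the other side together with `x0 ≡ p` implies
the literal. -/
theorem cut_partition_implied_literal {V ι : Type*} [Fintype V]
    (C : ι → (V → ZMod 2) × ZMod 2) (A : Set ι) (x0 : V)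
    (hcut : {v | ∃ i ∈ A, (C i).1 v ≠ 0} ∩ {v | ∃ i ∈ Aᶜ, (C i).1 v ≠ 0} = {x0})
    (lits : List (V × ZMod 2)) (y : V) (w : ZMod 2)
    (hsat : ∃ x : V → ZMod 2,
      (∀ i, ∑ v, (C i).1 v * x v = (C i).2) ∧ (∀ l ∈ lits, x l.1 = l.2))
    (hent : ∀ x : V → ZMod 2, (∀ i, ∑ v, (C i).1 v * x v = (C i).2) →
      (∀ l ∈ lits, x l.1 = l.2) → x y = w) :
    ((∀ x : V → ZMod 2, (∀ i ∈ A, ∑ v, (C i).1 v * x v = (C i).2) →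
        (∀ l ∈ lits, x l.1 = l.2) → x y = w) ∨
     (∀ x : V → ZMod 2, (∀ i ∈ Aᶜ, ∑ v, (C i).1 v * x v = (C i).2) →
        (∀ l ∈ lits, x l.1 = l.2) → x y = w)) ∨
    (∃ p : ZMod 2,
      (∀ x : V → ZMod 2, (∀ i ∈ A, ∑ v, (C i).1 v * x v = (C i).2) →
        (∀ l ∈ lits, x l.1 = l.2) → x x0 = p) ∧
      (∀ x : V → ZMod 2, (∀ i ∈ Aᶜ, ∑ v, (C i).1 v * x v = (C i).2) →
        (∀ l ∈ lits, x l.1 = l.2) → x x0 = p → x y = w)) ∨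
    (∃ p : ZMod 2,
      (∀ x : V → ZMod 2, (∀ i ∈ Aᶜ, ∑ v, (C i).1 v * x v = (C i).2) →
        (∀ l ∈ lits, x l.1 = l.2) → x x0 = p) ∧
      (∀ x : V → ZMod 2, (∀ i ∈ A, ∑ v, (C i).1 v * x v = (C i).2) →
        (∀ l ∈ lits, x l.1 = l.2) → x x0 = p → x y = w)) := by
  classical
  set Sa : Set V := {v | ∃ i ∈ A, (C i).1 v ≠ 0} with hSa
  -- splicing lemma
  have splice : ∀ xa xb : V → ZMod 2,
      (∀ i ∈ A, ∑ v, (C i).1 v * xa v = (C i).2) → (∀ l ∈ lits, xa l.1 = l.2) →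
      (∀ i ∈ Aᶜ, ∑ v, (C i).1 v * xb v = (C i).2) → (∀ l ∈ lits, xb l.1 = l.2) →
      xa x0 = xb x0 →
      (if y ∈ Sa then xa y else xb y) = w := by
    intro xa xb ha hla hb hlb hx
    set z : V → ZMod 2 := fun v => if v ∈ Sa then xa v else xb v with hzdef
    have hz : ∀ i, ∑ v, (C i).1 v * z v = (C i).2 := by
      intro i
      by_cases hiA : i ∈ A
      · rw [← ha i hiA]
        apply Finset.sum_congr rfl
        intro v _
        by_cases hc : (C i).1 v = 0
        · simp [hc]
        · have hv : v ∈ Sa := ⟨i, hiA, hc⟩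
          simp [hzdef, hv]
      · have hiB : i ∈ Aᶜ := hiA
        rw [← hb i hiB]
        apply Finset.sum_congr rfl
        intro v _
        by_cases hc : (C i).1 v = 0
        · simp [hc]
        · have hvb : v ∈ {v | ∃ i ∈ Aᶜ, (C i).1 v ≠ 0} := ⟨i, hiB, hc⟩
          by_cases hva : v ∈ Sa
          · have hvx : v = x0 := by
              have : v ∈ ({x0} : Set V) := by
                rw [← hcut]; exact ⟨hva, hvb⟩
              simpa using this
            subst hvx
            simp [hzdef, hva, hx]
          · simp [hzdef, hva]
    have hzl : ∀ l ∈ lits, z l.1 = l.2 := by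
      intro l hl
      by_cases hv : l.1 ∈ Sa
      · simp [hzdef, hv, hla l hl]
      · simp [hzdef, hv, hlb l hl]
    have := hent z hz hzl
    simpa [hzdef] using this
  obtain ⟨xg, hgc, hgl⟩ := hsat
  by_cases hyS : y ∈ Sa
  · by_cases hAy : ∀ x : V → ZMod 2, (∀ i ∈ A, ∑ v, (C i).1 v * x v = (C i).2) →
        (∀ l ∈ lits, x l.1 = l.2) → x y = w
    · exact Or.inl (Or.inl hAy)
    · push_neg at hAy
      obtain ⟨xa, ha, hla, hya⟩ := hAy
      have hBforce : ∀ x : V → ZMod 2, (∀ i ∈ Aᶜ, ∑ v, (C i).1 v * x v = (C i).2) →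
          (∀ l ∈ lits, x l.1 = l.2) → x x0 = xa x0 + 1 := by
        intro xb hb hlb
        by_contra h
        have hx0 : xa x0 = xb x0 := (zmod2_ne h).symm
        have := splice xa xb ha hla hb hlb hx0
        rw [if_pos hyS] at this
        exact hya this
      refine Or.inr (Or.inr ⟨xa x0 + 1, hBforce, ?_⟩)
      intro xa' ha' hla' hx0'
      have hgx0 : xg x0 = xa x0 + 1 := hBforce xg (fun i _ => hgc i) hgl
      have := splice xa' xg ha' hla' (fun i _ => hgc i) hgl (by rw [hx0', hgx0])
      rwa [if_pos hyS] at this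
  · by_cases hBy : ∀ x : V → ZMod 2, (∀ i ∈ Aᶜ, ∑ v, (C i).1 v * x v = (C i).2) →
        (∀ l ∈ lits, x l.1 = l.2) → x y = w
    · exact Or.inl (Or.inr hBy)
    · push_neg at hBy
      obtain ⟨xb, hb, hlb, hyb⟩ := hBy
      have hAforce : ∀ x : V → ZMod 2, (∀ i ∈ A, ∑ v, (C i).1 v * x v = (C i).2) →
          (∀ l ∈ lits, x l.1 = l.2) → x x0 = xb x0 + 1 := by
        intro xa ha hla
        by_contra h
        have hx0 : xa x0 = xb x0 := zmod2_ne h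
        have := splice xa xb ha hla hb hlb hx0
        rw [if_neg hyS] at this
        exact hyb this
      refine Or.inr (Or.inl ⟨xb x0 + 1, hAforce, ?_⟩)
      intro xb' hb' hlb' hx0'
      have hgx0 : xg x0 = xb x0 + 1 := hAforce xg (fun i _ => hgc i) hgl
      have := splice xg xb' (fun i _ => hgc i) hgl hb' hlb' (by rw [hx0', hgx0])
      rwa [if_neg hyS] at this
end

section
/- If a partial assignment τ makes an assigned tableau ⟨E, τ⟩ inconsistent (some equation has all variables assigned and is violated), then no total extension of τ satisfies the xor-constraint conjunction φ represented by E. -/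
/-- If an assigned tableau `⟨E,τ⟩` is inconsistent (some fully-assigned
equation is violated by `τ`), then no total extension of `τ` satisfies `φ`. -/
theorem inconsistent_tableau_unsat {V ι : Type*} [Fintype V]
    (C : ι → (V → ZMod 2) × ZMod 2)
    (B : Finset V) (r : V → V → ZMod 2) (p : V → ZMod 2)
    (τ : V → Option (ZMod 2))
    (hnb : ∀ b ∈ B, ∀ b' ∈ B, r b b' = 0)
    (hequiv : ∀ x : V → ZMod 2,
      (∀ i, ∑ v, (C i).1 v * x v = (C i).2) ↔
        ∀ b ∈ B, x b = (∑ v, r b v * x v) + p b)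
    (hincons : ∃ b ∈ B, (τ b).isSome ∧ (∀ v, r b v ≠ 0 → (τ v).isSome) ∧
      (τ b).getD 0 ≠ (∑ v, r b v * (τ v).getD 0) + p b) :
    ∀ x : V → ZMod 2, (∀ v c, τ v = some c → x v = c) →
      ¬ (∀ i, ∑ v, (C i).1 v * x v = (C i).2) := by
  intro x hx hsat
  obtain ⟨b, hb, hτb, hall, hne⟩ := hincons
  have hxb : x b = (τ b).getD 0 := by
    obtain ⟨c, hc⟩ := Option.isSome_iff_exists.mp hτb
    rw [hc, hx b c hc]; rfl
  have hsum : (∑ v, r b v * x v) = ∑ v, r b v * (τ v).getD 0 := by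
    apply Finset.sum_congr rfl
    intro v _
    by_cases h : r b v = 0
    · simp [h]
    · obtain ⟨c, hc⟩ := Option.isSome_iff_exists.mp (hall v h)
      rw [hc, hx v c hc]; rfl
  have := (hequiv x).mp hsat b hb
  rw [hxb, hsum] at this
  exact hne this
end

section
/- Let ⟨E, τ⟩ be a consistent, propagation-saturated assigned tableau for φ. Then every total assignment obtained from τ by assigning arbitrary GF(2) values to the unassigned non-basic variables and then evaluating each unassigned basic variable by its equation satisfies φ; moreover, these are exactly the total assignments extending τ that satisfy φ. -/
/-- For a consistent, propagation-saturated assigned tableau `⟨E,τ⟩` for `φ`,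
the total assignments extending `τ` and satisfying `φ` are exactly those
obtained by assigning arbitrary values `g` to the unassigned non-basic
variables and evaluating each unassigned basic variable by its equation. -/
theorem assigned_tableau_extensions {V ι : Type*} [Fintype V] [DecidableEq V]
    (C : ι → (V → ZMod 2) × ZMod 2)
    (B : Finset V) (r : V → V → ZMod 2) (p : V → ZMod 2)
    (τ : V → Option (ZMod 2))
    (hnb : ∀ b ∈ B, ∀ b' ∈ B, r b b' = 0)
    (hequiv : ∀ x : V → ZMod 2,
      (∀ i, ∑ v, (C i).1 v * x v = (C i).2) ↔
        ∀ b ∈ B, x b = (∑ v, r b v * x v) + p b)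
    (hsatur : ∀ b ∈ B, ((τ b).isSome ↔ ∀ v, r b v ≠ 0 → (τ v).isSome))
    (hcons : ∀ b ∈ B, ((τ b).isSome ∧ ∀ v, r b v ≠ 0 → (τ v).isSome) →
      (τ b).getD 0 = (∑ v, r b v * (τ v).getD 0) + p b) :
    ∀ x : V → ZMod 2,
      ((∀ v c, τ v = some c → x v = c) ∧
          (∀ i, ∑ v, (C i).1 v * x v = (C i).2)) ↔
        ∃ g : V → ZMod 2, x = fun v =>
          (τ v).getD
            (if v ∈ B then (∑ w, r v w * (τ w).getD (g w)) + p v else g v) := by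
  intro x
  constructor
  · rintro ⟨hext, hsat⟩
    refine ⟨x, funext fun v => ?_⟩
    have hgd : ∀ w, (τ w).getD (x w) = x w := by
      intro w
      cases hw : τ w with
      | none => rfl
      | some c => simpa using (hext w c hw).symm
    cases hv : τ v with
    | some c => simp [hext v c hv]
    | none =>
      by_cases hB : v ∈ B
      · have h := (hequiv x).mp hsat v hB
        simp only [Option.getD_none, if_pos hB, hgd]
        exact h
      · simp [hB]
  · rintro ⟨g, rfl⟩
    constructor
    · intro v c hvc; simp [hvc]
    · apply (hequiv _).mpr
      intro b hb
      have hsum : (∑ v, r b v *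
          (τ v).getD (if v ∈ B then (∑ w, r v w * (τ w).getD (g w)) + p v else g v))
          = ∑ v, r b v * (τ v).getD (g v) := by
        refine Finset.sum_congr rfl fun v _ => ?_
        by_cases hvB : v ∈ B
        · rw [hnb b hb v hvB]; ring
        · rw [if_neg hvB]
      simp only [hsum]
      cases hbv : τ b with
      | none => simp [if_pos hb]
      | some c =>
        have hbsome : (τ b).isSome := by simp [hbv]
        have hall : ∀ v, r b v ≠ 0 → (τ v).isSome := (hsatur b hb).mp hbsome
        have hc := hcons b hb ⟨hbsome, hall⟩
        have hsum2 : (∑ v, r b v * (τ v).getD 0) = ∑ v, r b v * (τ v).getD (g v) := by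
          refine Finset.sum_congr rfl fun v _ => ?_
          by_cases hrv : r b v = 0
          · rw [hrv]; ring
          · obtain ⟨c', hc'⟩ := Option.isSome_iff_exists.mp (hall v hrv)
            simp [hc']
        rw [hbv] at hc
        simpa [hsum2] using hc
end

section
/- Swapping preserves tableau equivalence: if E is a tableau for φ containing the equation x := y_1 ⊕ ... ⊕ y_k ⊕ p with y_i one of the right-hand-side variables, then the system obtained by replacing this equation with y_i := y_1 ⊕ ... ⊕ y_{i-1} ⊕ x ⊕ y_{i+1} ⊕ ... ⊕ y_k ⊕ p and substituting y_i by this right-hand side in all other equations is again logically equivalent to φ (as a conjunction of xor-constraints). -/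
/-- Swapping a basic variable `b` with a right-hand-side variable `c` preserves
logical equivalence of the tableau with `φ`. -/
theorem tableau_swap_equiv {V ι : Type*} [Fintype V] [DecidableEq V]
    (C : ι → (V → ZMod 2) × ZMod 2)
    (B : Finset V) (r : V → V → ZMod 2) (p : V → ZMod 2)
    (hnb : ∀ b ∈ B, ∀ b' ∈ B, r b b' = 0)
    (hequiv : ∀ x : V → ZMod 2,
      (∀ i, ∑ v, (C i).1 v * x v = (C i).2) ↔
        ∀ b ∈ B, x b = (∑ v, r b v * x v) + p b)
    (b : V) (hb : b ∈ B) (c : V) (hc : r b c = 1) :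
    ∀ x : V → ZMod 2,
      (∀ i, ∑ v, (C i).1 v * x v = (C i).2) ↔
        ∀ b' ∈ insert c (B.erase b),
          x b' =
            (∑ v, (if b' = c then
                     (if v = b then 1 else if v = c then 0 else r b v)
                   else
                     (if v = c then 0 else r b' v) +
                       r b' c * (if v = b then 1 else if v = c then 0 else r b v))
                  * x v)
              + (if b' = c then p b else p b' + r b' c * p b) := by
  intro x
  have hbb : r b b = 0 := hnb b hb b hb
  have hbc : b ≠ c := by rintro rfl; rw [hbb] at hc; exact zero_ne_one hc
  have hcB : c ∉ B := by
    intro h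
    have := hnb b hb c h
    rw [hc] at this
    exact one_ne_zero this
  have h2 : (2 : ZMod 2) = 0 := by decide
  have haa : ∀ a : ZMod 2, a + a = 0 := fun a => by linear_combination a * h2
  have hsum1 : (∑ v, (if v = b then 1 else if v = c then 0 else r b v) * x v)
      = x b + x c + ∑ v, r b v * x v := by
    have hp : ∀ v, (if v = b then (1 : ZMod 2) else if v = c then 0 else r b v) * x v
        = r b v * x v + ((if v = b then x v else 0) + (if v = c then x v else 0)) := by
      intro v
      by_cases h1 : v = b
      · subst h1; simp [hbc, hbb]
      · by_cases h1c : v = c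
        · subst h1c; simp [h1, hc, haa]
        · simp [h1, h1c]
    rw [Finset.sum_congr rfl fun v _ => hp v, Finset.sum_add_distrib, Finset.sum_add_distrib]
    simp only [Finset.sum_ite_eq', Finset.mem_univ, if_true]
    ring
  have hsumu : (∑ v, (if v = b then (1 : ZMod 2) else r b v) * x v)
      = x b + ∑ v, r b v * x v := by
    have hp : ∀ v, (if v = b then (1 : ZMod 2) else r b v) * x v
        = r b v * x v + (if v = b then x v else 0) := by
      intro v
      by_cases h1 : v = b
      · subst h1; simp [hbb]
      · simp [h1]
    rw [Finset.sum_congr rfl fun v _ => hp v, Finset.sum_add_distrib]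
    simp only [Finset.sum_ite_eq', Finset.mem_univ, if_true]
    ring
  have hsum2 : ∀ b', (∑ v, ((if v = c then 0 else r b' v)
        + r b' c * (if v = b then 1 else if v = c then 0 else r b v)) * x v)
      = (∑ v, r b' v * x v) + r b' c * (x b + ∑ v, r b v * x v) := by
    intro b'
    have hp : ∀ v, ((if v = c then (0 : ZMod 2) else r b' v)
          + r b' c * (if v = b then 1 else if v = c then 0 else r b v)) * x v
        = r b' v * x v + r b' c * ((if v = b then 1 else r b v) * x v) := by
      intro v
      by_cases h1 : v = b
      · subst h1; simp [hbc]; ring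
      · by_cases h1c : v = c
        · rw [h1c]
          simp only [if_pos rfl, if_neg (Ne.symm hbc), hc, eq_self_iff_true, if_true]
          linear_combination (-(r b' c * x c)) * h2
        · simp only [if_neg h1, if_neg h1c]
          ring
    rw [Finset.sum_congr rfl fun v _ => hp v, Finset.sum_add_distrib, ← Finset.mul_sum, hsumu]
  rw [hequiv x]
  constructor
  · intro H b' hb'
    rcases Finset.mem_insert.mp hb' with rfl | hmem
    · simp only [if_pos rfl, if_true, eq_self_iff_true]
      rw [hsum1]
      linear_combination H b hb - x b * h2
    · obtain ⟨hbne, hmemB⟩ := Finset.mem_erase.mp hmem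
      have hb'c : b' ≠ c := fun h => hcB (h ▸ hmemB)
      simp only [if_neg hb'c]
      rw [hsum2 b']
      linear_combination H b' hmemB - r b' c * H b hb
        - r b' c * ((∑ v, r b v * x v) + p b) * h2
  · intro H b'' hb''mem
    have Hc := H c (Finset.mem_insert_self c _)
    simp only [if_pos rfl, if_true, eq_self_iff_true] at Hc
    rw [hsum1] at Hc
    by_cases hbb' : b'' = b
    · subst hbb'
      linear_combination Hc + x b'' * h2
    · have hmem' : b'' ∈ insert c (B.erase b) :=
        Finset.mem_insert_of_mem (Finset.mem_erase.mpr ⟨hbb', hb''mem⟩)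
      have hb''c : b'' ≠ c := fun h => hcB (h ▸ hb''mem)
      have Hb' := H b'' hmem'
      simp only [if_neg hb''c] at Hb'
      rw [hsum2 b''] at Hb'
      linear_combination Hb' - r b'' c * Hc
end
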